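/- Let D be a nonzero real m×n matrix. Then every real n×n matrix C satisfying D = D C obeys ‖C‖_F² ≥ rank(D), where ‖·‖_F denotes the Frobenius norm. -/

import Mathlib

open Matrix

/-- The Frobenius norm of a real matrix: ‖M‖_F = sqrt(trace(M Mᵀ)). -/
noncomputable def frobeniusNorm {m n : ℕ} (M : Matrix (Fin m) (Fin n) ℝ) : ℝ :=
  Real.sqrt (Matrix.trace (M * Mᵀ))

lemma aux {n : ℕ} (A : Matrix (Fin n) (Fin n) ℝ)
    (V : Submodule ℝ (EuclideanSpace ℝ (Fin n)))
    (hfix : ∀ v ∈ V, A.mulVec v = v) :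
    (Module.finrank ℝ V : ℝ) ≤ ∑ j, ∑ k, A j k ^ 2 := by
  set r := Module.finrank ℝ V with hr
  have b := stdOrthonormalBasis ℝ V
  set w : Fin r → (Fin n → ℝ) := fun i => ((b i : V) : EuclideanSpace ℝ (Fin n)) with hwdef
  have hw : ∀ i i', ∑ j, w i j * w i' j = if i = i' then 1 else 0 := by
    intro i i'
    have h1 := b.orthonormal
    rw [orthonormal_iff_ite] at h1
    have h2 := h1 i i'
    rw [Submodule.coe_inner, PiLp.inner_apply] at h2
    simpa [RCLike.inner_apply, mul_comm] using h2
  have hfixw : ∀ i, A.mulVec (w i) = w i := fun i => hfix _ (b i).2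
  set g : Fin n → Fin n → ℝ := fun j k => ∑ i, w i j * w i k with hg
  have hS : ∑ j, ∑ k, A j k * g j k = (r : ℝ) := by
    calc ∑ j, ∑ k, A j k * g j k
        = ∑ j, ∑ k, ∑ i, A j k * (w i j * w i k) := by
          simp only [hg, Finset.mul_sum]
      _ = ∑ j, ∑ i, ∑ k, A j k * (w i j * w i k) :=
          Finset.sum_congr rfl fun j _ => Finset.sum_comm
      _ = ∑ i, ∑ j, ∑ k, A j k * (w i j * w i k) := Finset.sum_comm
      _ = ∑ i : Fin r, (1 : ℝ) := by
          refine Finset.sum_congr rfl fun i _ => ?_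
          have h3 : ∀ j, ∑ k, A j k * (w i j * w i k) = w i j * (A.mulVec (w i) j) := by
            intro j
            simp only [Matrix.mulVec, dotProduct, Finset.mul_sum]
            exact Finset.sum_congr rfl fun k _ => by ring
          simp only [h3, hfixw i]
          simpa using hw i i
      _ = (r : ℝ) := by simp
  have hG : ∑ j, ∑ k, g j k ^ 2 = (r : ℝ) := by
    calc ∑ j, ∑ k, g j k ^ 2
        = ∑ j, ∑ k, ∑ i, ∑ i', (w i j * w i' j) * (w i k * w i' k) := by
          refine Finset.sum_congr rfl fun j _ => Finset.sum_congr rfl fun k _ => ?_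
          rw [sq, hg, Finset.sum_mul_sum]
          exact Finset.sum_congr rfl fun i _ => Finset.sum_congr rfl fun i' _ => by ring
      _ = ∑ j, ∑ i, ∑ k, ∑ i', (w i j * w i' j) * (w i k * w i' k) :=
          Finset.sum_congr rfl fun j _ => Finset.sum_comm
      _ = ∑ j, ∑ i, ∑ i', ∑ k, (w i j * w i' j) * (w i k * w i' k) :=
          Finset.sum_congr rfl fun j _ => Finset.sum_congr rfl fun i _ => Finset.sum_comm
      _ = ∑ i, ∑ j, ∑ i', ∑ k, (w i j * w i' j) * (w i k * w i' k) := Finset.sum_comm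
      _ = ∑ i, ∑ i', ∑ j, ∑ k, (w i j * w i' j) * (w i k * w i' k) :=
          Finset.sum_congr rfl fun i _ => Finset.sum_comm
      _ = ∑ i, ∑ i', (∑ j, w i j * w i' j) * (∑ k, w i k * w i' k) := by
          refine Finset.sum_congr rfl fun i _ => Finset.sum_congr rfl fun i' _ => ?_
          rw [Finset.sum_mul_sum]
      _ = (r : ℝ) := by
          simp only [hw]
          simp
  -- Cauchy-Schwarz over the product type
  have hCS := Finset.sum_mul_sq_le_sq_mul_sq Finset.univ
      (fun p : Fin n × Fin n => A p.1 p.2) (fun p : Fin n × Fin n => g p.1 p.2)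
  simp only [Fintype.sum_prod_type] at hCS
  rw [hS, hG] at hCS
  rcases Nat.eq_zero_or_pos r with h0 | hpos
  · rw [h0]
    push_cast
    positivity
  · have hrpos : (0 : ℝ) < (r : ℝ) := by exact_mod_cast hpos
    nlinarith [hCS]

/-- For a nonzero real m×n matrix D, every real n×n matrix C with
D = D C satisfies ‖C‖_F² ≥ rank(D). -/
theorem stmt_6 {m n : ℕ}
    (D : Matrix (Fin m) (Fin n) ℝ) (hD : D ≠ 0) :
    ∀ C : Matrix (Fin n) (Fin n) ℝ, D = D * C →
      (frobeniusNorm C) ^ 2 ≥ (D.rank : ℝ) := by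
  intro C hC
  set V : Submodule ℝ (EuclideanSpace ℝ (Fin n)) := (LinearMap.range Dᵀ.mulVecLin).map
    (WithLp.linearEquiv 2 ℝ (Fin n → ℝ)).symm.toLinearMap with hV
  have hrank : D.rank = Module.finrank ℝ V := by rw [← Matrix.rank_transpose]; exact (LinearEquiv.finrank_map_eq _ _).symm
  have hfix : ∀ v ∈ V, Cᵀ.mulVec v = v := by
    rintro v ⟨y, ⟨x, rfl⟩, rfl⟩
    show Cᵀ.mulVec (Dᵀ.mulVec x) = Dᵀ.mulVec x
    rw [Matrix.mulVec_mulVec, ← Matrix.transpose_mul, ← hC]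
  have key := aux Cᵀ V hfix
  have htr : Matrix.trace (C * Cᵀ) = ∑ j, ∑ k, Cᵀ j k ^ 2 := by
    simp only [Matrix.trace, Matrix.diag, Matrix.mul_apply, Matrix.transpose_apply, sq]
    rw [Finset.sum_comm]
  have hnn : (0 : ℝ) ≤ Matrix.trace (C * Cᵀ) := by
    rw [htr]; positivity
  have hfro : frobeniusNorm C ^ 2 = ∑ j, ∑ k, Cᵀ j k ^ 2 := by
    rw [frobeniusNorm, Real.sq_sqrt hnn, htr]
  rw [ge_iff_le, hrank, hfro]
  exact key
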